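/- (Perfect correlation, known vs. unknown) Suppose θ̂ minimizes L(θ) = ½‖y − Xθ‖₂² + nλ·eye(θ) with nλ > 0, and columns i, j of X are identical with rᵢ = 1 and rⱼ = 0. Then θ̂ⱼ = 0. -/

import Mathlib

noncomputable def eye {d : ℕ} (r θ : Fin d → ℝ) : ℝ :=
  (∑ i, (1 - r i) * |θ i|) +
    Real.sqrt ((∑ i, (1 - r i) * |θ i|) ^ 2 + ∑ i, (r i * θ i) ^ 2)

lemma eye_aux_sqrt_ineq (A S a b : ℝ) (hA0 : 0 ≤ A) (hS0 : 0 ≤ S) (ha0 : 0 ≤ a)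
    (hb : 0 < b) :
    Real.sqrt (A ^ 2 + ((a + b) ^ 2 + S)) < b + Real.sqrt ((b + A) ^ 2 + (a ^ 2 + S)) := by
  have hinner0 : (0:ℝ) ≤ (b + A) ^ 2 + (a ^ 2 + S) := by positivity
  have ht : a ≤ Real.sqrt ((b + A) ^ 2 + (a ^ 2 + S)) := by
    have h := Real.sqrt_le_sqrt (show a ^ 2 ≤ (b + A) ^ 2 + (a ^ 2 + S) by nlinarith)
    rwa [Real.sqrt_sq ha0] at h
  have hsq := Real.sq_sqrt hinner0
  rw [Real.sqrt_lt' (by positivity)]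
  nlinarith [hsq, mul_le_mul_of_nonneg_left ht hb.le, mul_nonneg hb.le hA0,
    Real.sqrt_nonneg ((b + A) ^ 2 + (a ^ 2 + S))]

theorem eye_perfect_corr_known_vs_unknown {n d : ℕ}
    (X : Fin n → Fin d → ℝ) (y : Fin n → ℝ) (r : Fin d → ℝ)
    (hr : ∀ i, r i = 0 ∨ r i = 1)
    (nl : ℝ) (hnl : 0 < nl)
    (i j : Fin d) (hij : i ≠ j) (hri : r i = 1) (hrj : r j = 0)
    (hcol : ∀ k, X k i = X k j)
    (θhat : Fin d → ℝ)
    (hmin : ∀ θ : Fin d → ℝ,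
      (1 / 2) * (∑ k, (y k - ∑ l, X k l * θhat l) ^ 2) + nl * eye r θhat ≤
      (1 / 2) * (∑ k, (y k - ∑ l, X k l * θ l) ^ 2) + nl * eye r θ) :
    θhat j = 0 := by
  by_contra hj
  have hji : j ≠ i := hij.symm
  set θ' : Fin d → ℝ :=
    fun l => if l = i then θhat i + θhat j else if l = j then 0 else θhat l with hθ'
  have hmemj : j ∈ Finset.univ.erase i := Finset.mem_erase.mpr ⟨hji, Finset.mem_univ j⟩
  have hsplit : ∀ f : Fin d → ℝ,
      ∑ l, f l = f i + f j + ∑ l ∈ (Finset.univ.erase i).erase j, f l := by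
    intro f
    have h1 := Finset.sum_erase_add Finset.univ f (Finset.mem_univ i)
    have h2 := Finset.sum_erase_add (Finset.univ.erase i) f hmemj
    linarith
  have hθ'i : θ' i = θhat i + θhat j := by simp [hθ']
  have hθ'j : θ' j = 0 := by simp [hθ', hji]
  have hrest : ∀ g : ℝ → ℝ, ∀ l ∈ (Finset.univ.erase i).erase j, g (θ' l) = g (θhat l) := by
    intro g l hl
    simp only [Finset.mem_erase] at hl
    simp [hθ', hl.1, hl.2.1]
  -- residuals unchanged
  have hres : ∀ k, ∑ l, X k l * θ' l = ∑ l, X k l * θhat l := by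
    intro k
    rw [hsplit (fun l => X k l * θ' l), hsplit (fun l => X k l * θhat l)]
    have h3 : ∑ l ∈ (Finset.univ.erase i).erase j, X k l * θ' l
        = ∑ l ∈ (Finset.univ.erase i).erase j, X k l * θhat l := by
      refine Finset.sum_congr rfl ?_
      intro l hl
      simp only [Finset.mem_erase] at hl
      simp [hθ', hl.1, hl.2.1]
    rw [h3, hθ'i, hθ'j, hcol k]
    ring
  -- penalty pieces
  set A : ℝ := ∑ l ∈ (Finset.univ.erase i).erase j, (1 - r l) * |θhat l| with hA
  set S : ℝ := ∑ l ∈ (Finset.univ.erase i).erase j, (r l * θhat l) ^ 2 with hSdef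
  set a : ℝ := |θhat i| with ha
  set b : ℝ := |θhat j| with hbdef
  have hb : 0 < b := abs_pos.mpr hj
  have ha0 : 0 ≤ a := abs_nonneg _
  have hA0 : 0 ≤ A := by
    apply Finset.sum_nonneg
    intro l _
    rcases hr l with h | h <;> simp [h, abs_nonneg]
  have hS0 : 0 ≤ S := Finset.sum_nonneg fun l _ => sq_nonneg _
  have hEhat : eye r θhat = (b + A) + Real.sqrt ((b + A) ^ 2 + (θhat i ^ 2 + S)) := by
    unfold eye
    rw [hsplit (fun l => (1 - r l) * |θhat l|), hsplit (fun l => (r l * θhat l) ^ 2)]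
    rw [hri, hrj]
    have e1 : (1 - (1:ℝ)) * |θhat i| + (1 - 0) * |θhat j| + A = b + A := by rw [hbdef]; ring
    have e2 : ((1:ℝ) * θhat i) ^ 2 + ((0:ℝ) * θhat j) ^ 2 + S = θhat i ^ 2 + S := by ring
    rw [e1, e2]
  have hL1' : ∑ l, (1 - r l) * |θ' l| = A := by
    rw [hsplit (fun l => (1 - r l) * |θ' l|)]
    have h3 : ∑ l ∈ (Finset.univ.erase i).erase j, (1 - r l) * |θ' l| = A := by
      refine Finset.sum_congr rfl ?_
      intro l hl
      simp only [Finset.mem_erase] at hl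
      simp [hθ', hl.1, hl.2.1]
    rw [h3, hθ'i, hθ'j, hri, hrj]
    ring_nf
  have hQ' : ∑ l, (r l * θ' l) ^ 2 = (θhat i + θhat j) ^ 2 + S := by
    rw [hsplit (fun l => (r l * θ' l) ^ 2)]
    have h3 : ∑ l ∈ (Finset.univ.erase i).erase j, (r l * θ' l) ^ 2 = S := by
      refine Finset.sum_congr rfl ?_
      intro l hl
      simp only [Finset.mem_erase] at hl
      simp [hθ', hl.1, hl.2.1]
    rw [h3, hθ'i, hθ'j, hri, hrj]
    ring
  have hEθ' : eye r θ' = A + Real.sqrt (A ^ 2 + ((θhat i + θhat j) ^ 2 + S)) := by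
    unfold eye
    rw [hL1', hQ']
  -- key strict inequality
  have hsum_sq : (θhat i + θhat j) ^ 2 ≤ (a + b) ^ 2 := by
    have h1 : |θhat i + θhat j| ≤ a + b := abs_add_le _ _
    nlinarith [abs_nonneg (θhat i + θhat j), sq_abs (θhat i + θhat j)]
  have h1 : Real.sqrt (A ^ 2 + ((θhat i + θhat j) ^ 2 + S))
      ≤ Real.sqrt (A ^ 2 + ((a + b) ^ 2 + S)) := by
    apply Real.sqrt_le_sqrt
    nlinarith
  have h2 : Real.sqrt (A ^ 2 + ((a + b) ^ 2 + S))
      < b + Real.sqrt ((b + A) ^ 2 + (a ^ 2 + S)) :=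
    eye_aux_sqrt_ineq A S a b hA0 hS0 ha0 hb
  have ha2 : θhat i ^ 2 = a ^ 2 := (sq_abs (θhat i)).symm
  have key : eye r θ' < eye r θhat := by
    rw [hEθ', hEhat, ha2]
    linarith
  have hm := hmin θ'
  have hres' : ∑ k, (y k - ∑ l, X k l * θ' l) ^ 2 = ∑ k, (y k - ∑ l, X k l * θhat l) ^ 2 := by
    refine Finset.sum_congr rfl ?_
    intro k _
    rw [hres k]
  rw [hres'] at hm
  have hlt : nl * eye r θ' < nl * eye r θhat := mul_lt_mul_of_pos_left key hnl
  linarith
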